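/- arXiv:1810.05390 — 2 statements merged into one kernel-verified Lean document; each statement's English description precedes it below -/
import Mathlib

section
/- Let (X, μ1, μ2) be a generalized bitopological space and let A ⊆ X. The following are equivalent: (i) A is pairwise λ-closed; (ii) A = (F1 ∩ F2) ∩ (A^∧_{μ1} ∩ A^∧_{μ2}) for some μ1-closed set F1 and μ2-closed set F2; (iii) A = (cl_{μ1}(A) ∩ cl_{μ2}(A)) ∩ (L1 ∩ L2) for some ∧_{μ1}-set L1 and ∧_{μ2}-set L2; (iv) A = (cl_{μ1}(A) ∩ cl_{μ2}(A)) ∩ (A^∧_{μ1} ∩ A^∧_{μ2}). -/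
open Set

/-- A generalized topology on `X`: contains `∅` and is closed under arbitrary unions. -/
def IsGenTop {X : Type*} (μ : Set (Set X)) : Prop :=
  ∅ ∈ μ ∧ ∀ S ⊆ μ, ⋃₀ S ∈ μ

/-- `A` is μ-closed iff its complement is μ-open. -/
def gClosedSet {X : Type*} (μ : Set (Set X)) (A : Set X) : Prop := Aᶜ ∈ μ

/-- μ-closure: intersection of all μ-closed sets containing `A`. -/
def gCl {X : Type*} (μ : Set (Set X)) (A : Set X) : Set X :=
  ⋂₀ {F | gClosedSet μ F ∧ A ⊆ F}

/-- `A^∧_μ`: intersection of all μ-open sets containing `A`. -/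
def wedgeOp {X : Type*} (μ : Set (Set X)) (A : Set X) : Set X :=
  ⋂₀ {U | U ∈ μ ∧ A ⊆ U}

/-- `A^∨_μ`: union of all μ-closed sets contained in `A`. -/
def veeOp {X : Type*} (μ : Set (Set X)) (A : Set X) : Set X :=
  ⋃₀ {F | gClosedSet μ F ∧ F ⊆ A}

/-- `L` is a `∧_μ`-set. -/
def IsWedgeSet {X : Type*} (μ : Set (Set X)) (L : Set X) : Prop := L = wedgeOp μ L

/-- `M` is a `∨_μ`-set. -/
def IsVeeSet {X : Type*} (μ : Set (Set X)) (M : Set X) : Prop := M = veeOp μ M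

/-- `A` is `g_{μi}`-closed with respect to `μj`. -/
def GClosedWrt {X : Type*} (μi μj : Set (Set X)) (A : Set X) : Prop :=
  ∀ U ∈ μj, A ⊆ U → gCl μi A ⊆ U

/-- `A` is `g_{μi}`-open with respect to `μj`. -/
def GOpenWrt {X : Type*} (μi μj : Set (Set X)) (A : Set X) : Prop :=
  GClosedWrt μi μj Aᶜ

/-- `A` is `λ_{μi}`-closed with respect to `μj`. -/
def LamClosedWrt {X : Type*} (μi μj : Set (Set X)) (A : Set X) : Prop :=
  ∃ F L : Set X, gClosedSet μi F ∧ IsWedgeSet μj L ∧ A = F ∩ L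

/-- `A` is `λ_{μi}`-open with respect to `μj`. -/
def LamOpenWrt {X : Type*} (μi μj : Set (Set X)) (A : Set X) : Prop :=
  LamClosedWrt μi μj Aᶜ

/-- `A` is pairwise `λ`-closed. -/
def PairwiseLamClosed {X : Type*} (μ1 μ2 : Set (Set X)) (A : Set X) : Prop :=
  ∃ F1 F2 L1 L2 : Set X, gClosedSet μ1 F1 ∧ gClosedSet μ2 F2 ∧
    IsWedgeSet μ1 L1 ∧ IsWedgeSet μ2 L2 ∧ A = (F1 ∩ F2) ∩ (L1 ∩ L2)

def PairwiseT0 {X : Type*} (μ1 μ2 : Set (Set X)) : Prop :=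
  ∀ x y : X, x ≠ y →
    (∃ U ∈ μ1, x ∈ U ∧ y ∉ U) ∨ (∃ V ∈ μ2, y ∈ V ∧ x ∉ V)

def PairwiseT1 {X : Type*} (μ1 μ2 : Set (Set X)) : Prop :=
  ∀ x y : X, x ≠ y →
    (∃ U ∈ μ1, x ∈ U ∧ y ∉ U) ∧ (∃ V ∈ μ2, y ∈ V ∧ x ∉ V)

def PairwiseSymmetric {X : Type*} (μ1 μ2 : Set (Set X)) : Prop :=
  ∀ x y : X, (x ∈ gCl μ1 {y} → y ∈ gCl μ2 {x}) ∧ (x ∈ gCl μ2 {y} → y ∈ gCl μ1 {x})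

def PairwiseTHalf {X : Type*} (μ1 μ2 : Set (Set X)) : Prop :=
  (∀ A : Set X, GClosedWrt μ1 μ2 A → gClosedSet μ1 A) ∧
  (∀ A : Set X, GClosedWrt μ2 μ1 A → gClosedSet μ2 A)

def PairwiseR0 {X : Type*} (μ1 μ2 : Set (Set X)) : Prop :=
  (∀ G ∈ μ1, ∀ x ∈ G, gCl μ2 {x} ⊆ G) ∧ (∀ G ∈ μ2, ∀ x ∈ G, gCl μ1 {x} ⊆ G)

def PairwiseLamSymmetric {X : Type*} (μ1 μ2 : Set (Set X)) : Prop :=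
  ∀ A : Set X, PairwiseLamClosed μ1 μ2 A →
    LamClosedWrt μ1 μ2 A ∧ LamClosedWrt μ2 μ1 A

/-- `A` and `B` are μ-weakly separated. -/
def MuWeaklySeparated {X : Type*} (μ : Set (Set X)) (A B : Set X) : Prop :=
  ∃ U ∈ μ, ∃ V ∈ μ, A ⊆ U ∧ B ⊆ V ∧ A ∩ V = ∅ ∧ B ∩ U = ∅

def PairwiseTQuarter {X : Type*} (μ1 μ2 : Set (Set X)) : Prop :=
  ∀ P : Set X, P.Finite → ∀ y ∉ P,
    ∃ A : Set X, P ⊆ A ∧ y ∉ A ∧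
      (A ∈ μ1 ∨ A ∈ μ2 ∨ gClosedSet μ1 A ∨ gClosedSet μ2 A)

def PairwiseTThreeEighths {X : Type*} (μ1 μ2 : Set (Set X)) : Prop :=
  ∀ P : Set X, P.Countable → ∀ y ∉ P,
    ∃ A : Set X, P ⊆ A ∧ y ∉ A ∧
      (A ∈ μ1 ∨ A ∈ μ2 ∨ gClosedSet μ1 A ∨ gClosedSet μ2 A)

def PairwiseTFiveEighths {X : Type*} (μ1 μ2 : Set (Set X)) : Prop :=
  ∀ P : Set X, ∀ y ∉ P,
    ∃ A : Set X, P ⊆ A ∧ y ∉ A ∧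
      (A ∈ μ1 ∨ A ∈ μ2 ∨ gClosedSet μ1 A ∨ gClosedSet μ2 A)
lemma subset_wedgeOp {X : Type*} (μ : Set (Set X)) (A : Set X) : A ⊆ wedgeOp μ A :=
  fun x hx => fun U hU => hU.2 hx

lemma wedgeOp_subset {X : Type*} {μ : Set (Set X)} {A U : Set X} (hU : U ∈ μ) (h : A ⊆ U) :
    wedgeOp μ A ⊆ U := sInter_subset_of_mem ⟨hU, h⟩

lemma wedgeOp_mono {X : Type*} (μ : Set (Set X)) {A B : Set X} (h : A ⊆ B) :
    wedgeOp μ A ⊆ wedgeOp μ B := fun x hx U hU => hx U ⟨hU.1, h.trans hU.2⟩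

lemma isWedgeSet_wedgeOp {X : Type*} (μ : Set (Set X)) (A : Set X) :
    IsWedgeSet μ (wedgeOp μ A) := by
  apply Subset.antisymm (subset_wedgeOp μ _)
  intro x hx U hU
  exact hx U ⟨hU.1, wedgeOp_subset hU.1 hU.2⟩

lemma subset_gCl {X : Type*} (μ : Set (Set X)) (A : Set X) : A ⊆ gCl μ A :=
  fun x hx F hF => hF.2 hx

lemma gCl_subset {X : Type*} {μ : Set (Set X)} {A F : Set X} (hF : gClosedSet μ F)
    (h : A ⊆ F) : gCl μ A ⊆ F := sInter_subset_of_mem ⟨hF, h⟩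

lemma gClosed_gCl {X : Type*} {μ : Set (Set X)} (hμ : IsGenTop μ) (A : Set X) :
    gClosedSet μ (gCl μ A) := by
  unfold gClosedSet gCl
  rw [compl_sInter]
  apply hμ.2
  rintro U ⟨F, ⟨hF, _⟩, rfl⟩
  exact hF

theorem stmt11 {X : Type*} (μ1 μ2 : Set (Set X))
    (h1 : IsGenTop μ1) (h2 : IsGenTop μ2) (A : Set X) :
    (PairwiseLamClosed μ1 μ2 A ↔
      ∃ F1 F2 : Set X, gClosedSet μ1 F1 ∧ gClosedSet μ2 F2 ∧
        A = (F1 ∩ F2) ∩ (wedgeOp μ1 A ∩ wedgeOp μ2 A)) ∧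
    (PairwiseLamClosed μ1 μ2 A ↔
      ∃ L1 L2 : Set X, IsWedgeSet μ1 L1 ∧ IsWedgeSet μ2 L2 ∧
        A = (gCl μ1 A ∩ gCl μ2 A) ∩ (L1 ∩ L2)) ∧
    (PairwiseLamClosed μ1 μ2 A ↔
      A = (gCl μ1 A ∩ gCl μ2 A) ∩ (wedgeOp μ1 A ∩ wedgeOp μ2 A)) := by
  have key : PairwiseLamClosed μ1 μ2 A ↔
      A = (gCl μ1 A ∩ gCl μ2 A) ∩ (wedgeOp μ1 A ∩ wedgeOp μ2 A) := by
    constructor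
    · rintro ⟨F1, F2, L1, L2, hF1, hF2, hL1, hL2, rfl⟩
      set B := (F1 ∩ F2) ∩ (L1 ∩ L2) with hB
      apply Subset.antisymm
      · exact subset_inter (subset_inter (subset_gCl _ _) (subset_gCl _ _))
          (subset_inter (subset_wedgeOp _ _) (subset_wedgeOp _ _))
      · intro x hx
        have hBF1 : B ⊆ F1 := fun y hy => hy.1.1
        have hBF2 : B ⊆ F2 := fun y hy => hy.1.2
        have hBL1 : B ⊆ L1 := fun y hy => hy.2.1
        have hBL2 : B ⊆ L2 := fun y hy => hy.2.2
        have w1 : wedgeOp μ1 B ⊆ L1 := hL1 ▸ wedgeOp_mono μ1 hBL1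
        have w2 : wedgeOp μ2 B ⊆ L2 := hL2 ▸ wedgeOp_mono μ2 hBL2
        exact ⟨⟨gCl_subset hF1 hBF1 hx.1.1, gCl_subset hF2 hBF2 hx.1.2⟩,
          w1 hx.2.1, w2 hx.2.2⟩
    · intro hA
      exact ⟨gCl μ1 A, gCl μ2 A, wedgeOp μ1 A, wedgeOp μ2 A,
        gClosed_gCl h1 A, gClosed_gCl h2 A, isWedgeSet_wedgeOp μ1 A,
        isWedgeSet_wedgeOp μ2 A, hA⟩
  refine ⟨?_, ?_, key⟩
  · constructor
    · intro h
      exact ⟨gCl μ1 A, gCl μ2 A, gClosed_gCl h1 A, gClosed_gCl h2 A, key.mp h⟩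
    · rintro ⟨F1, F2, hF1, hF2, hA⟩
      exact ⟨F1, F2, wedgeOp μ1 A, wedgeOp μ2 A, hF1, hF2,
        isWedgeSet_wedgeOp μ1 A, isWedgeSet_wedgeOp μ2 A, hA⟩
  · constructor
    · intro h
      exact ⟨wedgeOp μ1 A, wedgeOp μ2 A, isWedgeSet_wedgeOp μ1 A,
        isWedgeSet_wedgeOp μ2 A, key.mp h⟩
    · rintro ⟨L1, L2, hL1, hL2, hA⟩
      exact ⟨gCl μ1 A, gCl μ2 A, L1, L2, gClosed_gCl h1 A, gClosed_gCl h2 A,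
        hL1, hL2, hA⟩
end

section
/- Every generalized bitopological space (X, μ1, μ2) that is pairwise T1 and pairwise λ-symmetric is pairwise T_{1/2}. -/
open Set

lemma gCl_closed {X : Type*} {μ : Set (Set X)} (h : IsGenTop μ) (A : Set X) :
    gClosedSet μ (gCl μ A) := by
  have : (gCl μ A)ᶜ = ⋃₀ {U | U ∈ μ ∧ A ⊆ Uᶜ} := by
    ext x
    simp only [gCl, mem_compl_iff, mem_sInter, mem_sUnion, mem_setOf_eq, not_forall]
    constructor
    · rintro ⟨F, ⟨hF, hAF⟩, hxF⟩
      exact ⟨Fᶜ, ⟨hF, by simpa using hAF⟩, hxF⟩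
    · rintro ⟨U, ⟨hU, hAU⟩, hxU⟩
      exact ⟨Uᶜ, ⟨by simpa [gClosedSet] using hU, hAU⟩, by simpa using hxU⟩
  rw [gClosedSet, this]
  exact h.2 _ (fun U hU => hU.1)

lemma wedge_of_sep {X : Type*} {μ : Set (Set X)} (h : IsGenTop μ)
    (hs : ∀ x y : X, x ≠ y → ∃ U ∈ μ, x ∈ U ∧ y ∉ U) (A : Set X) :
    IsWedgeSet μ A := by
  apply Subset.antisymm
  · intro x hx U hU
    exact hU.2 hx
  intro x hx
  by_contra hxA
  set U := ⋃₀ {V | V ∈ μ ∧ x ∉ V} with hUdef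
  have hUμ : U ∈ μ := h.2 _ (fun V hV => hV.1)
  have hAU : A ⊆ U := by
    intro a ha
    obtain ⟨V, hVμ, haV, hxV⟩ := hs a x (fun e => hxA (e ▸ ha))
    exact mem_sUnion.mpr ⟨V, ⟨hVμ, hxV⟩, haV⟩
  have : x ∈ U := mem_sInter.mp hx U ⟨hUμ, hAU⟩
  obtain ⟨V, ⟨_, hxV⟩, hxV'⟩ := this
  exact hxV hxV'

lemma closed_of_lam {X : Type*} {μi μj : Set (Set X)} (hi : IsGenTop μi)
    {A : Set X} (hlam : LamClosedWrt μi μj A) (hg : GClosedWrt μi μj A) :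
    gClosedSet μi A := by
  obtain ⟨F, L, hF, hL, rfl⟩ := hlam
  have hcl : gCl μi (F ∩ L) ⊆ F ∩ L := by
    intro x hx
    constructor
    · exact hx F ⟨hF, inter_subset_left⟩
    · rw [hL]
      intro U hU
      exact hg U hU.1 (fun a ha => hU.2 ha.2) hx
  have : F ∩ L = gCl μi (F ∩ L) := Subset.antisymm (subset_gCl _ _) hcl
  rw [this]
  exact gCl_closed hi _

theorem stmt15 {X : Type*} (μ1 μ2 : Set (Set X))
    (h1 : IsGenTop μ1) (h2 : IsGenTop μ2)
    (hT1 : PairwiseT1 μ1 μ2) (hsym : PairwiseLamSymmetric μ1 μ2) :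
    PairwiseTHalf μ1 μ2 := by
  have w1 : ∀ A : Set X, IsWedgeSet μ1 A :=
    wedge_of_sep h1 (fun x y hxy => (hT1 x y hxy).1)
  have w2 : ∀ A : Set X, IsWedgeSet μ2 A :=
    wedge_of_sep h2 (fun x y hxy => ((hT1 y x hxy.symm).2).imp (fun U hU => ⟨hU.1, hU.2⟩))
  have hpl : ∀ A : Set X, PairwiseLamClosed μ1 μ2 A := by
    intro A
    refine ⟨univ, univ, A, A, ?_, ?_, w1 A, w2 A, by simp⟩
    · simp [gClosedSet, h1.1]
    · simp [gClosedSet, h2.1]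
  constructor
  · intro A hg
    exact closed_of_lam h1 ((hsym A (hpl A)).1) hg
  · intro A hg
    exact closed_of_lam h2 ((hsym A (hpl A)).2) hg
end
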